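/- Let b_1, …, b_r be a T-chain with parameters (d, n, a). Then r − d ≥ 0 and the index n satisfies n ≤ F_{r−d}. -/
import Mathlib


/-- Hirzebruch–Jung continued fraction of a list of integers:
`hjcf [] = 0` (junk value), `hjcf (b :: l) = b - 1 / hjcf l`.
Since `(0 : ℚ)⁻¹ = 0`, this gives `hjcf [b] = b`, matching the recursion
`[b_r] = b_r`, `[b_1, …, b_r] = b_1 − 1/[b_2, …, b_r]`. -/
def hjcf : List ℤ → ℚ
  | [] => 0
  | b :: l => (b : ℚ) - (hjcf l)⁻¹

/-- `IsTChain l d n a` : the nonempty list `l` of integers, all ≥ 2, is a T-chain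
with parameters `(d, n, a)`, i.e. its Hirzebruch–Jung continued fraction equals
`d n² / (d n a − 1)` where `d ≥ 1`, `n ≥ 2`, `0 < a < n`, `gcd(n, a) = 1`. -/
def IsTChain (l : List ℤ) (d n a : ℤ) : Prop :=
  l ≠ [] ∧ (∀ b ∈ l, 2 ≤ b) ∧
  1 ≤ d ∧ 2 ≤ n ∧ 0 < a ∧ a < n ∧ Int.gcd n a = 1 ∧
  hjcf l = (d * n ^ 2 : ℚ) / (d * n * a - 1)


/-- numerator/denominator pair of the HJ continued fraction -/
def fpq : List ℤ → ℤ × ℤ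
  | [] => (1, 0)
  | b :: l => (b * (fpq l).1 - (fpq l).2, (fpq l).1)

lemma fpq_bounds {l : List ℤ} (hb : ∀ b ∈ l, 2 ≤ b) :
    0 ≤ (fpq l).2 ∧ (fpq l).2 < (fpq l).1 := by
  induction l with
  | nil => simp [fpq]
  | cons b t IH =>
    have hb2 : 2 ≤ b := hb b (List.mem_cons_self ..)
    have IH' := IH (fun x hx => hb x (List.mem_cons_of_mem _ hx))
    simp only [fpq]
    constructor
    · nlinarith [IH'.1, IH'.2]
    · nlinarith [IH'.1, IH'.2]

lemma fpq_snd_pos {l : List ℤ} (hb : ∀ b ∈ l, 2 ≤ b) (hne : l ≠ []) :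
    1 ≤ (fpq l).2 := by
  cases l with
  | nil => simp at hne
  | cons b t =>
    have := fpq_bounds (fun x hx => hb x (List.mem_cons_of_mem _ hx))
    simp only [fpq]
    omega

lemma fpq_coprime (l : List ℤ) : IsCoprime (fpq l).1 (fpq l).2 := by
  induction l with
  | nil => simp [fpq, isCoprime_one_left]
  | cons b t IH =>
    obtain ⟨u, v, huv⟩ := IH
    exact ⟨-v, u + v * b, by simp only [fpq]; linear_combination huv⟩

lemma hjcf_eq_fpq {l : List ℤ} (hb : ∀ b ∈ l, 2 ≤ b) :
    hjcf l = ((fpq l).1 : ℚ) / ((fpq l).2 : ℚ) := by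
  induction l with
  | nil => simp [hjcf, fpq]
  | cons b t IH =>
    have IH' := IH (fun x hx => hb x (List.mem_cons_of_mem _ hx))
    have hbd := fpq_bounds (l := t) (fun x hx => hb x (List.mem_cons_of_mem _ hx))
    have hp : (0 : ℚ) < ((fpq t).1 : ℚ) := by exact_mod_cast by omega
    simp only [hjcf, fpq, IH', inv_div]
    push_cast
    field_simp

lemma fpq_nil : fpq [] = (1,0) := rfl


lemma fpq_cons (b : ℤ) (l : List ℤ) :
    fpq (b :: l) = (b * (fpq l).1 - (fpq l).2, (fpq l).1) := rfl

lemma fpq_append {l : List ℤ} (h : l ≠ []) (c : ℤ) :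
    fpq (l ++ [c]) = (c * (fpq l).1 - (fpq l.dropLast).1,
      c * (fpq l).2 - (fpq l.dropLast).2) := by
  induction l with
  | nil => simp at h
  | cons b m IH =>
    cases m with
    | nil =>
      rw [Prod.ext_iff]
      constructor <;> simp [fpq] <;> ring
    | cons c' m' =>
      have hne : (c' :: m') ≠ [] := by simp
      have h0 : (b :: c' :: m') ++ [c] = b :: ((c' :: m') ++ [c]) := by simp
      rw [h0, fpq_cons, IH hne, List.dropLast_cons_of_ne_nil hne, Prod.ext_iff]
      constructor <;> simp only [fpq_cons] <;> ring

lemma fpq_reverse {l : List ℤ} (h : l ≠ []) :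
    fpq l.reverse = ((fpq l).1, (fpq l.dropLast).1) := by
  induction l using List.reverseRecOn with
  | nil => simp at h
  | append_singleton m c IH =>
    cases hm : m with
    | nil => simp [fpq]
    | cons b m' =>
      subst hm
      have hne : (b :: m') ≠ [] := by simp
      have h2 : ((b :: m') ++ [c]).reverse = c :: (b :: m').reverse := by simp
      have h3 : ((b :: m') ++ [c]).dropLast = b :: m' := List.dropLast_concat ..
      rw [h2, h3, fpq_cons, IH hne, fpq_append hne c]

lemma fpq_det {l : List ℤ} (h : l ≠ []) :
    (fpq l).2 * (fpq l.dropLast).1 - (fpq l).1 * (fpq l.dropLast).2 = 1 := by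
  induction l with
  | nil => simp at h
  | cons b m IH =>
    cases m with
    | nil => simp [fpq]
    | cons c m' =>
      have hne : (c :: m') ≠ [] := by simp
      rw [List.dropLast_cons_of_ne_nil hne]
      have h1 := IH hne
      rw [fpq_cons b (c::m'), fpq_cons b ((c::m').dropLast)]
      simp only
      linear_combination h1
/-- pin an integer in a residue class with small absolute difference -/
lemma int_eq_of_dvd {p x y : ℤ} (hd : p ∣ (x - y)) (hx0 : 0 ≤ x) (hxp : x < p)
    (hy0 : 0 ≤ y) (hyp : y < p) : x = y := by
  obtain ⟨c, hc⟩ := hd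
  rcases lt_trichotomy c 0 with h | h | h
  · nlinarith
  · subst h; simp at hc; omega
  · nlinarith

lemma frac_unique {a b c e : ℤ} (hb : 0 < b) (he : 0 < e)
    (h1 : IsCoprime a b) (h2 : IsCoprime c e) (h : (a : ℚ)/b = (c : ℚ)/e) :
    a = c ∧ b = e := by
  have hb' : (b : ℚ) ≠ 0 := by exact_mod_cast hb.ne'
  have he' : (e : ℚ) ≠ 0 := by exact_mod_cast he.ne'
  rw [div_eq_div_iff hb' he'] at h
  have hae : a * e = c * b := by exact_mod_cast h
  have hbe : b ∣ e := by
    have : b ∣ a * e := ⟨c, by linarith⟩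
    exact (h1.symm).dvd_of_dvd_mul_left this
  have heb : e ∣ b := by
    have : e ∣ c * b := ⟨a, by linarith⟩
    exact (h2.symm).dvd_of_dvd_mul_left this
  have hbe2 : b = e := Int.dvd_antisymm (le_of_lt hb) (le_of_lt he) hbe heb
  subst hbe2
  constructor
  · have := mul_right_cancel₀ (by exact_mod_cast hb.ne' : b ≠ 0) hae
    exact this
  · rfl

/-- chains for (2k+1)/(2k-1) have length exactly k -/
lemma chain_odd_length : ∀ (l : List ℤ) (k : ℤ), (∀ b ∈ l, 2 ≤ b) → 1 ≤ k →
    fpq l = (2*k+1, 2*k-1) → (l.length : ℤ) = k := by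
  intro l
  induction l with
  | nil => intro k _ hk h; rw [fpq_nil, Prod.ext_iff] at h; simp at h; omega
  | cons b t IH =>
    intro k hb hk h
    have hb2 : 2 ≤ b := hb b (List.mem_cons_self ..)
    have hbt : ∀ x ∈ t, 2 ≤ x := fun x hx => hb x (List.mem_cons_of_mem _ hx)
    rw [fpq_cons, Prod.ext_iff] at h
    obtain ⟨h1, h2⟩ := h
    simp only at h1 h2
    -- (fpq t).1 = 2k-1, b*(2k-1) - (fpq t).2 = 2k+1
    have hbd := fpq_bounds hbt
    rcases eq_or_lt_of_le hk with hk1 | hk2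
    · -- k = 1 : fpq t = (1, 0), t = []
      have ht : t = [] := by
        by_contra hne
        have := fpq_snd_pos hbt hne
        omega
      subst ht
      simp only [List.length_cons, List.length_nil]
      omega
    · -- k ≥ 2 : b = 2
      have hk2' : 2 ≤ k := hk2
      have hbeq : b = 2 := by nlinarith [hbd.1, hbd.2]
      subst hbeq
      have ht : fpq t = (2*(k-1)+1, 2*(k-1)-1) := by
        rw [Prod.ext_iff]; constructor <;> simp <;> omega
      have := IH (k-1) hbt (by omega) ht
      simp only [List.length_cons]
      push_cast
      omega
set_option maxHeartbeats 2000000 in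
lemma tchain_main : ∀ (r : ℕ) (l : List ℤ) (d n a : ℤ), l.length = r → l ≠ [] →
    (∀ b ∈ l, 2 ≤ b) → 1 ≤ d → 2 ≤ n → 0 < a → a < n → IsCoprime n a →
    fpq l = (d*n^2, d*n*a - 1) →
    ∃ k : ℕ, (r : ℤ) = d + k ∧ n ≤ (Nat.fib (k+3) : ℤ) ∧
      a ≤ (Nat.fib (k+2) : ℤ) ∧ n - a ≤ (Nat.fib (k+2) : ℤ) := by
  intro r
  induction r using Nat.strong_induction_on with
  | _ r IH =>
  intro l d n a hlen hne hb hd hn ha1 ha2 hcop hf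
  by_cases hn2 : n = 2
  · -- base case n = 2 : the chain is [3,2,...,2,3] (or [4]), length d
    subst hn2
    have ha : a = 1 := by omega
    subst ha
    cases l with
    | nil => exact absurd rfl hne
    | cons b t =>
      rw [fpq_cons, Prod.ext_iff] at hf
      obtain ⟨h1, h2⟩ := hf
      simp only at h1 h2
      have hbt : ∀ x ∈ t, 2 ≤ x := fun x hx => hb x (List.mem_cons_of_mem _ hx)
      have hbd := fpq_bounds hbt
      have hb2 : 2 ≤ b := hb b (List.mem_cons_self ..)
      have hrd : (r : ℤ) = d := by
        rcases eq_or_lt_of_le hd with hd1 | hd2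
        · -- d = 1
          have ht1 : (fpq t).1 = 1 := by rw [h2]; omega
          have ht : t = [] := by
            by_contra hne'
            have := fpq_snd_pos hbt hne'
            omega
          subst ht
          simp only [List.length_cons, List.length_nil] at hlen
          omega
        · -- d ≥ 2
          have hd2' : 2 ≤ d := hd2
          have hbeq : b = 3 := by nlinarith [hbd.1, hbd.2]
          have h1' : 3*(2*d-1) - (fpq t).2 = 4*d := by
            rw [hbeq, h2] at h1; linarith
          have ht : fpq t = (2*(d-1)+1, 2*(d-1)-1) := by
            rw [Prod.ext_iff]
            constructor <;> simp only <;> omega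
          have := chain_odd_length t (d-1) hbt (by omega) ht
          simp only [List.length_cons] at hlen
          omega
      refine ⟨0, by omega, ?_, ?_, ?_⟩ <;> norm_num
  · have hn3 : 3 ≤ n := by omega
    have hne2a : 2*a ≠ n := by
      intro hh
      obtain ⟨u, v, huv⟩ := hcop
      have hdvd : a ∣ 1 := ⟨2*u + v, by linear_combination -huv - u*hh⟩
      have := Int.le_of_dvd one_pos hdvd
      omega
    -- key: the case 2a > n
    have key : ∀ (l' : List ℤ) (a' : ℤ), l'.length = r → (∀ b ∈ l', 2 ≤ b) →
        0 < a' → a' < n → n < 2*a' → IsCoprime n a' → fpq l' = (d*n^2, d*n*a' - 1) →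
        ∃ k : ℕ, (r : ℤ) = d + k ∧ n ≤ (Nat.fib (k+3) : ℤ) ∧
          a' ≤ (Nat.fib (k+2) : ℤ) ∧ n - a' ≤ (Nat.fib (k+2) : ℤ) := by
      intro l' a' hlen' hb' ha1' ha2' h2a hcop' hf'
      have ha2'' : 2 ≤ a' := by omega
      have hdn3 : 3 ≤ d*n := by nlinarith
      have hdna3 : 3 ≤ d*n*a' := by nlinarith
      have hq2 : 2 ≤ d*n*a' - 1 := by omega
      have hqp : d*n*a' - 1 < d*n^2 := by nlinarith
      have hp2q : d*n^2 < 2*(d*n*a' - 1) := by nlinarith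
      cases l' with
      | nil => rw [fpq_nil, Prod.ext_iff] at hf'; simp only at hf'; omega
      | cons b t =>
        rw [fpq_cons, Prod.ext_iff] at hf'
        obtain ⟨h1, h2⟩ := hf'
        simp only at h1 h2
        have hbt : ∀ x ∈ t, 2 ≤ x := fun x hx => hb' x (List.mem_cons_of_mem _ hx)
        have hbd := fpq_bounds hbt
        have hb2 : 2 ≤ b := hb' b (List.mem_cons_self ..)
        have hbeq : b = 2 := by
          have : ¬ 3 ≤ b := by intro h3; nlinarith [hbd.1, hbd.2]
          omega
        subst hbeq
        have hQ : (fpq t).2 = 2*(d*n*a' - 1) - d*n^2 := by rw [h2] at h1; linarith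
        have htne : t ≠ [] := by
          intro h; subst h
          rw [fpq_nil] at h2; simp only at h2; omega
        obtain ⟨x, s, hxs⟩ : ∃ x s, t.reverse = x :: s := by
          cases hrt : t.reverse with
          | nil => exact absurd (List.reverse_eq_nil_iff.mp hrt) htne
          | cons x s => exact ⟨x, s, rfl⟩
        have hrev := fpq_reverse htne
        have hbtr : ∀ x ∈ t.reverse, 2 ≤ x := fun x hx => hbt x (List.mem_reverse.mp hx)
        have hrevbd := fpq_bounds hbtr
        rw [hrev] at hrevbd
        simp only at hrevbd
        have hdet := fpq_det htne
        -- identify e := (fpq t.dropLast).1 with d*a'*(n-a') - 1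
        have he0lb : 0 ≤ d*a'*(n-a') - 1 := by nlinarith
        have he0ub : d*a'*(n-a') - 1 < d*n*a' - 1 := by nlinarith
        have hdvd : (d*n*a' - 1) ∣ ((fpq t.dropLast).1 - (d*a'*(n-a') - 1)) := by
          have hcop2 : IsCoprime ((fpq t).1) ((fpq t).2) := fpq_coprime t
          rw [h2, hQ] at hcop2
          have hmul : (d*n*a' - 1) ∣ (2*(d*n*a' - 1) - d*n^2) *
              ((fpq t.dropLast).1 - (d*a'*(n-a') - 1)) := by
            refine ⟨(fpq t.dropLast).2 - (3*d*n*a' - d*n^2 - 2*d*a'^2 - 1), ?_⟩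
            rw [hQ, h2] at hdet
            linear_combination hdet
          exact hcop2.dvd_of_dvd_mul_left hmul
        have heq : (fpq t.dropLast).1 = d*a'*(n-a') - 1 := by
          refine int_eq_of_dvd hdvd ?_ ?_ he0lb he0ub
          · have := fpq_bounds (l := t.dropLast)
              (fun x hx => hbt x (List.dropLast_subset _ hx))
            omega
          · rw [h2] at hrevbd; omega
        -- structure of t.reverse = x :: s
        rw [hxs, fpq_cons, Prod.ext_iff] at hrev
        obtain ⟨hr1, hr2⟩ := hrev
        simp only at hr1 hr2
        rw [h2] at hr1
        rw [heq] at hr2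
        rw [hr2] at hr1
        -- hr1 : x * (d*a'*(n-a') - 1) - (fpq s).2 = d*n*a' - 1 ; hr2 : (fpq s).1 = d*a'*(n-a') - 1
        have hbs : ∀ y ∈ s, 2 ≤ y := fun y hy => hbtr y (hxs ▸ List.mem_cons_of_mem _ hy)
        have hsbd := fpq_bounds hbs
        have hna' : 1 ≤ n - a' := by omega
        have hda : (1:ℤ)*2 ≤ d*a' := mul_le_mul hd ha2'' (by norm_num) (by linarith)
        have he1' : (2:ℤ)*1 ≤ (d*a')*(n-a') := mul_le_mul (by linarith) hna' (by norm_num) (by linarith)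
        have he1 : 1 ≤ d*a'*(n-a') - 1 := by linarith [he1']
        have h2an : 1 ≤ 2*a' - n := by omega
        have h2an' : (2:ℤ)*1 ≤ (d*a')*(2*a' - n) := mul_le_mul (by linarith) h2an (by norm_num) (by linarith)
        have hring : d*n*a' - 1 - (2*(d*a'*(n-a') - 1) + 3) = (d*a')*(2*a' - n) - 2 := by ring
        have hq2e : 2*(d*a'*(n-a') - 1) + 3 ≤ d*n*a' - 1 := by linarith [hring, h2an']
        have hx3 : 3 ≤ x := by
          by_contra hx2
          push_neg at hx2
          have hxmem : 2 ≤ x := hbtr x (hxs ▸ List.mem_cons_self ..)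
          have hxe : x = 2 := by omega
          subst hxe
          omega
        -- the new shorter T-chain
        have hl2 : fpq ((x-1) :: s) = (d*a'^2, d*a'*(n-a') - 1) := by
          rw [fpq_cons, Prod.ext_iff]
          constructor <;> simp only
          · rw [hr2]; linear_combination hr1
          · exact hr2
        clear hdet hrevbd
        simp only [List.length_cons] at hlen'
        have hlent : t.length = r - 1 := by omega
        have hr1' : 1 ≤ r := by omega
        have hlen2 : ((x-1) :: s).length = r - 1 := by
          have : s.length + 1 = t.length := by
            have := congrArg List.length hxs
            simpa [List.length_reverse] using this.symm
          simp only [List.length_cons]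
          omega
        have hb2' : ∀ y ∈ (x-1) :: s, 2 ≤ y := by
          intro y hy
          rcases List.mem_cons.mp hy with h | h
          · omega
          · exact hbs y h
        have hcop3 : IsCoprime a' (n - a') := by
          obtain ⟨u, v, huv⟩ := hcop'
          exact ⟨u + v, u, by linear_combination huv⟩
        obtain ⟨k, hk1, hk2, hk3, hk4⟩ :=
          IH (r-1) (by omega) ((x-1) :: s) d a' (n - a') hlen2 (List.cons_ne_nil _ _)
            hb2' hd ha2'' (by omega) (by omega) hcop3 hl2
        have hfib : Nat.fib (k+4) = Nat.fib (k+2) + Nat.fib (k+3) := Nat.fib_add_two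
        have hfible : Nat.fib (k+2) ≤ Nat.fib (k+3) := Nat.fib_le_fib_succ
        have hcast : ((r - 1 : ℕ) : ℤ) = (r : ℤ) - 1 := by omega
        rw [hcast] at hk1
        refine ⟨k+1, by push_cast; omega, ?_, ?_, ?_⟩
        · have : (k+1)+3 = k+4 := by omega
          rw [this]
          have : (Nat.fib (k+4) : ℤ) = (Nat.fib (k+2) : ℤ) + (Nat.fib (k+3) : ℤ) := by
            exact_mod_cast hfib
          omega
        · have : (k+1)+2 = k+3 := by omega
          rw [this]; omega
        · have : (k+1)+2 = k+3 := by omega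
          rw [this]
          have : (Nat.fib (k+2) : ℤ) ≤ (Nat.fib (k+3) : ℤ) := by exact_mod_cast hfible
          omega
    rcases lt_or_gt_of_ne hne2a with h2a | h2a
    · -- 2a < n : pass to the reversed chain, parameters (d, n, n-a)
      have hrev := fpq_reverse hne
      have hbr : ∀ x ∈ l.reverse, 2 ≤ x := fun x hx => hb x (List.mem_reverse.mp hx)
      have hrevbd := fpq_bounds hbr
      rw [hrev] at hrevbd
      have hdet := fpq_det hne
      simp only at hrevbd
      rw [hf] at hrev hrevbd
      simp only at hrev hrevbd
      have hna1 : 1 ≤ n - a := by omega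
      have hdn3 : (1:ℤ)*3 ≤ d*n := mul_le_mul hd hn3 (by norm_num) (by omega)
      have hE0lb' : (1:ℤ)*1 ≤ (d*n)*(n-a) := mul_le_mul (by omega) hna1 (by norm_num) (by omega)
      have hE0lb : 0 ≤ d*n*(n-a) - 1 := by omega
      have hE0ub' : (d*n)*(n-a) < (d*n)*n := mul_lt_mul_of_pos_left (by omega : n - a < n) (by omega : (0:ℤ) < d*n)
      have hsq : (d*n)*n = d*n^2 := by ring
      have hE0ub : d*n*(n-a) - 1 < d*n^2 := by omega
      have hdvd : (d*n^2) ∣ ((fpq l.dropLast).1 - (d*n*(n-a) - 1)) := by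
        have hcop2 : IsCoprime ((fpq l).1) ((fpq l).2) := fpq_coprime l
        rw [hf] at hcop2
        simp only at hcop2
        have hmul : (d*n^2) ∣ (d*n*a - 1) * ((fpq l.dropLast).1 - (d*n*(n-a) - 1)) := by
          refine ⟨(fpq l.dropLast).2 - (d*n*a - 1 - d*a^2), ?_⟩
          rw [hf] at hdet
          simp only at hdet
          linear_combination hdet
        exact hcop2.dvd_of_dvd_mul_left hmul
      have heq : (fpq l.dropLast).1 = d*n*(n-a) - 1 := by
        refine int_eq_of_dvd hdvd ?_ ?_ hE0lb hE0ub
        · have := fpq_bounds (l := l.dropLast)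
            (fun x hx => hb x (List.dropLast_subset _ hx))
          omega
        · omega
      have hcop4 : IsCoprime n (n - a) := by
        obtain ⟨u, v, huv⟩ := hcop
        exact ⟨u + v, -v, by linear_combination huv⟩
      obtain ⟨k, hk1, hk2, hk3, hk4⟩ := key l.reverse (n - a)
        (by rw [List.length_reverse]; exact hlen) hbr (by omega) (by omega) (by omega)
        hcop4 (by rw [hrev, heq])
      exact ⟨k, hk1, hk2, by omega, by omega⟩
    · exact key l a hlen hb ha1 ha2 h2a hcop hf


/-- For a T-chain with parameters (d, n, a) of length r,
one has r − d ≥ 0 and n ≤ F_{r−d}, where F_i = Nat.fib (i + 3). -/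
theorem tchain_index_le_fib (l : List ℤ) (d n a : ℤ) (h : IsTChain l d n a) :
    d ≤ (l.length : ℤ) ∧ n ≤ (Nat.fib (((l.length : ℤ) - d).toNat + 3) : ℤ) := by
  obtain ⟨hne, hb, hd, hn, ha1, ha2, hg, hval⟩ := h
  have hcop : IsCoprime n a := Int.isCoprime_iff_gcd_eq_one.mpr hg
  have hcopf : IsCoprime (d*n^2) (d*n*a - 1) := ⟨d*a^2, -(d*n*a+1), by ring⟩
  have hdn2 : (1:ℤ)*2 ≤ d*n := mul_le_mul hd hn (by norm_num) (by omega)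
  have hdna2 : (2:ℤ)*1 ≤ (d*n)*a := mul_le_mul (by omega) (by omega) (by norm_num) (by omega)
  have hq : 0 < d*n*a - 1 := by omega
  have hqpos : 0 < (fpq l).2 := fpq_snd_pos hb hne
  have hval2 : ((fpq l).1 : ℚ) / ((fpq l).2 : ℚ) = ((d*n^2 : ℤ) : ℚ) / ((d*n*a - 1 : ℤ) : ℚ) := by
    rw [← hjcf_eq_fpq hb, hval]
    push_cast
    ring_nf
  obtain ⟨h1, h2⟩ := frac_unique hqpos hq (fpq_coprime l) hcopf hval2
  have hf : fpq l = (d*n^2, d*n*a - 1) := Prod.ext_iff.mpr ⟨h1, h2⟩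
  obtain ⟨k, hk1, hk2, _, _⟩ :=
    tchain_main l.length l d n a rfl hne hb hd hn ha1 ha2 hcop hf
  constructor
  · omega
  · have hkk : ((l.length : ℤ) - d).toNat = k := by omega
    rw [hkk]
    exact hk2
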